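/- Let Γ be an uncountable set, regarded as a discrete topological space, and let Γ ∪ {∞} be its one-point compactification. Then there exists a continuous linear operator T on the Banach algebra C(Γ ∪ {∞}, ℂ) of continuous complex-valued functions with the supremum norm such that T is not surjective, yet for every f there is an algebra automorphism χ of C(Γ ∪ {∞}, ℂ) (which is also a surjective linear isometry) with T f = χ(f). Consequently, both the isometry group and the automorphism group of C(Γ ∪ {∞}, ℂ) fail to be algebraically reflexive. -/

import Mathlib

set_option synthInstance.maxHeartbeats 1000000
set_option maxHeartbeats 1000000

open OnePoint Filter Set Cardinal Topology

/-- For an uncountable discrete space Γ, the Banach algebra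
C(Γ ∪ {∞}, ℂ) on the one-point compactification admits a non-surjective continuous
linear operator which agrees at each point with some algebra automorphism (which is
also a surjective linear isometry); hence the isometry group and the automorphism
group of C(Γ ∪ {∞}, ℂ) are not algebraically reflexive. -/
theorem onePoint_uncountable_isometry_and_automorphism_groups_not_algebraically_reflexive
    (Γ : Type*) [TopologicalSpace Γ] [DiscreteTopology Γ] [Uncountable Γ] :
    ∃ T : C(OnePoint Γ, ℂ) →L[ℂ] C(OnePoint Γ, ℂ),
      ¬ Function.Surjective T ∧
      ∀ f : C(OnePoint Γ, ℂ), ∃ χ : C(OnePoint Γ, ℂ) ≃ₐ[ℂ] C(OnePoint Γ, ℂ),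
        (∀ g : C(OnePoint Γ, ℂ), ‖χ g‖ = ‖g‖) ∧ T f = χ f := by
  classical
  -- a bijection `k : Γ ≃ OnePoint Γ`
  have hmk : (#(OnePoint Γ)) = #Γ := by
    have e : OnePoint Γ ≃ Option Γ := Equiv.refl _
    rw [Cardinal.mk_congr e, Cardinal.mk_option, Cardinal.mk_add_one_eq]
  obtain ⟨k⟩ : Nonempty (Γ ≃ OnePoint Γ) := Cardinal.eq.mp hmk.symm
  -- `k` tends to `∞` along the cofinite filter
  have htendk : Tendsto (fun γ : Γ => k γ) cofinite (𝓝 ∞) := by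
    rw [(OnePoint.hasBasis_nhds_infty (X := Γ)).tendsto_right_iff]
    rintro s ⟨-, hs⟩
    rw [Filter.eventually_cofinite]
    have hfin : (((↑) : Γ → OnePoint Γ) '' s).Finite :=
      (hs.finite_of_discrete).image _
    refine ((hfin.preimage (k.injective.injOn)).subset ?_)
    intro γ hγ
    simp only [Set.mem_setOf_eq, Set.mem_union, not_or] at hγ
    rcases hk : k γ with _ | γ'
    · exact absurd (show k γ ∈ {∞} by rw [hk]; rfl) hγ.2
    · simp only [Set.mem_preimage, hk]
      refine Set.mem_image_of_mem _ ?_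
      by_contra hns
      exact hγ.1 (by rw [hk]; exact Set.mem_image_of_mem _ hns)
  -- the continuous map `H : OnePoint Γ → OnePoint Γ`, `H γ = k γ`, `H ∞ = ∞`
  let H : C(OnePoint Γ, OnePoint Γ) := OnePoint.continuousMapMkDiscrete (fun γ => k γ) ∞ htendk
  have hHcoe : ∀ γ : Γ, H ↑γ = k γ := fun γ => rfl
  have hHinf : H ∞ = ∞ := rfl
  -- the operator T
  let T : C(OnePoint Γ, ℂ) →L[ℂ] C(OnePoint Γ, ℂ) :=
    ⟨(ContinuousMap.compRightAlgHom ℂ ℂ H).toLinearMap,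
      ContinuousMap.compRightAlgHom_continuous ℂ ℂ H⟩
  have hT : ∀ (f : C(OnePoint Γ, ℂ)) (x : OnePoint Γ), T f x = f (H x) := fun _ _ => rfl
  set γ0 : Γ := k.symm ∞ with hγ0
  have hkγ0 : k γ0 = ∞ := k.apply_symm_apply ∞
  refine ⟨T, ?_, ?_⟩
  · -- T is not surjective
    intro hs
    have h0 : Tendsto (fun γ : Γ => if γ = γ0 then (1:ℂ) else 0) cofinite (𝓝 0) := by
      refine tendsto_const_nhds.congr' ?_
      filter_upwards [(Set.finite_singleton γ0).compl_mem_cofinite] with γ hγ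
      simp_all
    obtain ⟨f, hf⟩ := hs (OnePoint.continuousMapMkDiscrete _ 0 h0)
    have h1 : T f ↑γ0 = f ∞ := by rw [hT, hHcoe, hkγ0]
    have h2 : T f ∞ = f ∞ := rfl
    rw [hf] at h1 h2
    have e1 : OnePoint.continuousMapMkDiscrete (fun γ => if γ = γ0 then (1:ℂ) else 0) 0 h0 ↑γ0
        = 1 := by simp [OnePoint.continuousMapMkDiscrete, OnePoint.continuousMapMk]
    have e2 : OnePoint.continuousMapMkDiscrete (fun γ => if γ = γ0 then (1:ℂ) else 0) 0 h0 ∞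
        = 0 := rfl
    rw [e1] at h1; rw [e2] at h2
    exact one_ne_zero (h1.trans h2.symm)
  · -- local agreement with automorphisms
    intro f
    set c : ℂ := f ∞ with hc
    set Cset : Set Γ := {γ : Γ | f ↑γ ≠ c} with hCset
    -- Cset is countable
    have htf : Tendsto (fun γ : Γ => f ↑γ) cofinite (𝓝 c) :=
      (OnePoint.continuous_iff_from_discrete f).mp f.continuous
    have hfin : ∀ ε : ℝ, 0 < ε → {γ : Γ | ¬ dist (f ↑γ) c < ε}.Finite := by
      intro ε hε
      have h := htf (Metric.ball_mem_nhds c hε)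
      rw [Filter.mem_map, Filter.mem_cofinite] at h
      refine h.subset fun γ hγ => ?_
      simpa [Metric.mem_ball] using hγ
    have hCc : Cset.Countable := by
      have hsub : Cset ⊆ ⋃ n : ℕ, {γ : Γ | ¬ dist (f ↑γ) c < 1 / (n + 1 : ℝ)} := by
        intro γ hγ
        obtain ⟨n, hn⟩ := exists_nat_one_div_lt (dist_pos.mpr hγ)
        exact Set.mem_iUnion.mpr ⟨n, not_lt.mpr hn.le⟩
      exact (Set.countable_iUnion fun n => (hfin _ (by positivity)).countable).mono hsub
    set A : Set Γ := k ⁻¹' (((↑) : Γ → OnePoint Γ) '' Cset) with hA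
    have hAc : A.Countable := (hCc.image _).preimage k.injective
    -- the equivalence between A and Cset
    let unco : OnePoint Γ → Γ := fun x => Option.elim x γ0 id
    have hunco : ∀ γ : Γ, unco ↑γ = γ := fun _ => rfl
    have hmemA : ∀ a : Γ, a ∈ A → ∃ γ' ∈ Cset, (↑γ' : OnePoint Γ) = k a := fun a ha => ha
    let e1 : A ≃ Cset :=
      { toFun := fun a => ⟨unco (k ↑a), by
          obtain ⟨γ', hγ', hh⟩ := hmemA _ a.2
          rw [← hh, hunco]; exact hγ'⟩
        invFun := fun c => ⟨k.symm ↑(c : Γ), by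
          simp only [hA, Set.mem_preimage, k.apply_symm_apply]
          exact Set.mem_image_of_mem _ c.2⟩
        left_inv := fun a => by
          obtain ⟨γ', hγ', hh⟩ := hmemA _ a.2
          apply Subtype.ext
          show k.symm ↑(unco (k ↑a)) = ↑a
          rw [← hh, hunco, hh, k.symm_apply_apply]
        right_inv := fun c => by
          apply Subtype.ext
          show unco (k (k.symm ↑(c : Γ))) = ↑c
          rw [k.apply_symm_apply, hunco] }
    have he1 : ∀ a : A, ((e1 a : Γ) : OnePoint Γ) = k ↑a := by
      intro a
      obtain ⟨γ', hγ', hh⟩ := hmemA _ a.2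
      show ((unco (k ↑a) : Γ) : OnePoint Γ) = k ↑a
      rw [← hh, hunco]
    -- the equivalence between complements
    have hAlt : #A < #Γ := hAc.le_aleph0.trans_lt (Cardinal.aleph0_lt_mk (α := Γ))
    have hClt : #Cset < #Γ := hCc.le_aleph0.trans_lt (Cardinal.aleph0_lt_mk (α := Γ))
    obtain ⟨e2⟩ : Nonempty ((↥(Aᶜ)) ≃ (↥(Csetᶜ))) :=
      Cardinal.eq.mp (Cardinal.mk_compl_eq_mk_compl_infinite hAlt hClt)
    -- the permutation
    let π : Equiv.Perm Γ :=
      (Equiv.Set.sumCompl A).symm.trans ((e1.sumCongr e2).trans (Equiv.Set.sumCompl Cset))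
    have hπ : ∀ γ : Γ, f (k γ) = f ↑(π γ) := by
      intro γ
      by_cases hγ : γ ∈ A
      · have : π γ = ↑(e1 ⟨γ, hγ⟩) := by
          simp only [π, Equiv.trans_apply, Equiv.Set.sumCompl_symm_apply_of_mem hγ,
            Equiv.sumCongr_apply, Sum.map_inl, Equiv.Set.sumCompl_apply_inl]
        rw [this, he1 ⟨γ, hγ⟩]
      · have hπC : π γ ∉ Cset := by
          have : π γ = ↑(e2 ⟨γ, hγ⟩) := by
            simp only [π, Equiv.trans_apply, Equiv.Set.sumCompl_symm_apply_of_notMem hγ,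
              Equiv.sumCongr_apply, Sum.map_inr, Equiv.Set.sumCompl_apply_inr]
          rw [this]; exact (e2 ⟨γ, hγ⟩).2
        have h1 : f (k γ) = c := by
          rcases hk : k γ with _ | γ'
          · exact hc.symm ▸ rfl
          · have : γ' ∉ Cset := fun hmem => hγ (by
              simp only [hA, Set.mem_preimage, hk]
              exact Set.mem_image_of_mem _ hmem)
            exact not_not.mp fun h => this h
        have h2 : f ↑(π γ) = c := not_not.mp fun h => hπC h
        rw [h1, h2]
    -- the homeomorphism and algebra automorphism
    let πt : Γ ≃ₜ Γ := ⟨π, continuous_of_discreteTopology, continuous_of_discreteTopology⟩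
    let E : OnePoint Γ ≃ₜ OnePoint Γ := πt.onePointCongr
    have hinv1 : (ContinuousMap.compRightAlgHom ℂ ℂ (E : C(OnePoint Γ, OnePoint Γ))).comp
        (ContinuousMap.compRightAlgHom ℂ ℂ (E.symm : C(OnePoint Γ, OnePoint Γ)))
        = AlgHom.id ℂ _ := by
      apply AlgHom.ext; intro g; apply ContinuousMap.ext; intro x
      simp
    have hinv2 : (ContinuousMap.compRightAlgHom ℂ ℂ (E.symm : C(OnePoint Γ, OnePoint Γ))).comp
        (ContinuousMap.compRightAlgHom ℂ ℂ (E : C(OnePoint Γ, OnePoint Γ)))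
        = AlgHom.id ℂ _ := by
      apply AlgHom.ext; intro g; apply ContinuousMap.ext; intro x
      simp
    let χ : C(OnePoint Γ, ℂ) ≃ₐ[ℂ] C(OnePoint Γ, ℂ) :=
      AlgEquiv.ofAlgHom (ContinuousMap.compRightAlgHom ℂ ℂ (E : C(OnePoint Γ, OnePoint Γ)))
        (ContinuousMap.compRightAlgHom ℂ ℂ (E.symm : C(OnePoint Γ, OnePoint Γ))) hinv1 hinv2
    have hχ : ∀ (g : C(OnePoint Γ, ℂ)) (x : OnePoint Γ), χ g x = g (E x) := fun _ _ => rfl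
    have hnorm_le : ∀ (g : C(OnePoint Γ, ℂ)) (e : C(OnePoint Γ, OnePoint Γ)),
        ‖g.comp e‖ ≤ ‖g‖ := fun g e =>
      (ContinuousMap.norm_le _ (norm_nonneg g)).mpr fun x => g.norm_coe_le_norm (e x)
    refine ⟨χ, ?_, ?_⟩
    · intro g
      refine le_antisymm (hnorm_le g _) ?_
      have hgg : g = (g.comp (E : C(OnePoint Γ, OnePoint Γ))).comp
          (E.symm : C(OnePoint Γ, OnePoint Γ)) := by
        apply ContinuousMap.ext; intro x; simp
      have hle := hnorm_le (g.comp (E : C(OnePoint Γ, OnePoint Γ)))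
        (E.symm : C(OnePoint Γ, OnePoint Γ))
      rw [← hgg] at hle
      exact hle
    · apply ContinuousMap.ext
      intro x
      rw [hT, hχ]
      refine OnePoint.rec ?_ ?_ x
      · rw [hHinf]
        have : E ∞ = ∞ := rfl
        rw [this]
      · intro γ
        rw [hHcoe]
        have hE : E ↑γ = ↑(π γ) := rfl
        rw [hE]
        exact hπ γ
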